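/- The filtered colimit of a direct system of coherent commutative rings with flat transition maps is a coherent ring. -/

import Mathlib

open TensorProduct

universe u v

section Aux

variable {ι : Type u} [Preorder ι] [IsDirected ι (· ≤ ·)] [Nonempty ι]
    (G : ι → Type v) [∀ i, CommRing (G i)]
    (f : ∀ i j, i ≤ j → G i →+* G j)
    [DirectedSystem G fun i j h => f i j h]

omit [DirectedSystem G fun i j h => f i j h] in
theorem myExistsLiftFamily {κ : Type*} [Fintype κ] (i₀ : ι)
    (x : κ → Ring.DirectLimit G fun i j h => f i j h) :
    ∃ (j : ι) (_ : i₀ ≤ j) (y : κ → G j),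
      ∀ k, Ring.DirectLimit.of G (fun i j h => f i j h) j (y k) = x k := by
  classical
  choose i y hy using fun k => Ring.DirectLimit.exists_of (x k)
  obtain ⟨j, hj⟩ := (insert i₀ (Finset.image i Finset.univ)).exists_le
  have hj0 : i₀ ≤ j := hj _ (Finset.mem_insert_self _ _)
  have hjk : ∀ k, i k ≤ j := fun k => hj _ (by simp)
  exact ⟨j, hj0, fun k => f (i k) j (hjk k) (y k), fun k => by
    rw [Ring.DirectLimit.of_f, hy]⟩

theorem myFlatDirectLimit [DecidableEq ι]
    (hflat : ∀ i j (h : i ≤ j), (f i j h).Flat) (i₀ : ι) :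
    letI : Algebra (G i₀) (Ring.DirectLimit G fun i j h => f i j h) :=
      (Ring.DirectLimit.of G (fun i j h => f i j h) i₀).toAlgebra
    Module.Flat (G i₀) (Ring.DirectLimit G fun i j h => f i j h) := by
  classical
  letI : Algebra (G i₀) (Ring.DirectLimit G fun i j h => f i j h) :=
    (Ring.DirectLimit.of G (fun i j h => f i j h) i₀).toAlgebra
  set R := Ring.DirectLimit G fun i j h => f i j h with hR
  have halg : (algebraMap (G i₀) R) = Ring.DirectLimit.of G (fun i j h => f i j h) i₀ :=
    RingHom.algebraMap_toAlgebra _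
  rw [Module.Flat.iff_lift_lsmul_comp_subtype_injective]
  intro J _
  rw [injective_iff_map_eq_zero]
  intro t ht
  obtain ⟨S, hS⟩ := TensorProduct.exists_finset t
  set n := S.card with hn
  let e : Fin n ≃ ↥S := S.equivFin.symm
  let a : Fin n → J := fun q => (e q : J × R).1
  let r : Fin n → R := fun q => (e q : J × R).2
  have hts : t = ∑ q, a q ⊗ₜ[G i₀] r q := by
    rw [hS, ← Finset.sum_attach S fun p => p.1 ⊗ₜ[G i₀] p.2]
    exact (Equiv.sum_comp e fun p => (p : J × R).1 ⊗ₜ[G i₀] (p : J × R).2).symm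
  obtain ⟨j, hij, y, hy⟩ := myExistsLiftFamily G f i₀ r
  have h1 : Ring.DirectLimit.of G (fun i j h => f i j h) j
      (∑ q, f i₀ j hij (a q) * y q) = 0 := by
    rw [map_sum]
    have : ∀ q : Fin n, Ring.DirectLimit.of G (fun i j h => f i j h) j
        (f i₀ j hij (a q) * y q) = (a q : G i₀) • r q := by
      intro q
      rw [map_mul, Ring.DirectLimit.of_f, hy, Algebra.smul_def, halg]
    rw [Finset.sum_congr rfl fun q _ => this q]
    rw [hts] at ht
    simpa [map_sum] using ht
  obtain ⟨k, hjk, hk0⟩ := Ring.DirectLimit.of.zero_exact h1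
  have hmap : ∀ x : G i₀, f j k hjk (f i₀ j hij x) = f i₀ k (hij.trans hjk) x := fun x =>
    DirectedSystem.map_map (f := fun i j h => (f i j h : G i → G j)) hij hjk x
  have hk : ∑ q : Fin n, f i₀ k (hij.trans hjk) (a q) * f j k hjk (y q) = 0 := by
    rw [map_sum] at hk0
    rw [← hk0]
    exact Finset.sum_congr rfl fun q _ => by rw [map_mul, hmap]
  letI : Algebra (G i₀) (G k) := (f i₀ k (hij.trans hjk)).toAlgebra
  have halgk : (algebraMap (G i₀) (G k)) = f i₀ k (hij.trans hjk) :=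
    RingHom.algebraMap_toAlgebra _
  haveI : Module.Flat (G i₀) (G k) := hflat i₀ k (hij.trans hjk)
  set a' : ULift.{v} (Fin n) → G i₀ := fun q => a q.down with ha'
  set z : ULift.{v} (Fin n) → G k := fun q => f j k hjk (y q.down) with hz
  have hrel : ∑ q, a' q • z q = 0 := by
    rw [← Equiv.sum_comp (Equiv.ulift.{v} (α := Fin n)).symm fun q => a' q • z q]
    simpa [a', z, Algebra.smul_def, halgk] using hk
  obtain ⟨κ, c, w, hw1, hw2⟩ := Module.Flat.isTrivialRelation_of_sum_smul_eq_zero (R := G i₀) (M := G k) (f := a') (x := z) hrel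
  have hr : ∀ q : Fin n, r q = Ring.DirectLimit.of G (fun i j h => f i j h) k (z ⟨q⟩) := by
    intro q
    rw [hz]
    dsimp only
    rw [Ring.DirectLimit.of_f, hy]
  have hofsmul : ∀ (cc : G i₀) (x : G k),
      Ring.DirectLimit.of G (fun i j h => f i j h) k (cc • x)
        = cc • Ring.DirectLimit.of G (fun i j h => f i j h) k x := by
    intro cc x
    rw [Algebra.smul_def, halgk, map_mul, Ring.DirectLimit.of_f, Algebra.smul_def, halg]
  rw [hts]
  calc ∑ q : Fin n, a q ⊗ₜ[G i₀] r q
      = ∑ q : Fin n, ∑ m : Fin κ, (c ⟨q⟩ m • a q) ⊗ₜ[G i₀]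
          (Ring.DirectLimit.of G (fun i j h => f i j h) k (w m)) := by
        refine Finset.sum_congr rfl fun q _ => ?_
        rw [hr q, hw1 ⟨q⟩, map_sum, tmul_sum]
        refine Finset.sum_congr rfl fun m _ => ?_
        rw [hofsmul, tmul_smul, smul_tmul']
    _ = ∑ m : Fin κ, (∑ q : Fin n, c ⟨q⟩ m • a q) ⊗ₜ[G i₀]
          (Ring.DirectLimit.of G (fun i j h => f i j h) k (w m)) := by
        rw [Finset.sum_comm]
        exact Finset.sum_congr rfl fun m _ => (sum_tmul _ _ _).symm
    _ = 0 := by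
        refine Finset.sum_eq_zero fun m _ => ?_
        have hzero : (∑ q : Fin n, c ⟨q⟩ m • a q) = 0 := by
          have h2 := hw2 m
          rw [← Equiv.sum_comp (Equiv.ulift.{v} (α := Fin n)).symm fun q => a' q * c q m] at h2
          apply Subtype.ext
          rw [AddSubmonoidClass.coe_finset_sum, ZeroMemClass.coe_zero, ← h2]
          refine Finset.sum_congr rfl fun q _ => ?_
          rw [SetLike.val_smul, smul_eq_mul, mul_comm]
          rfl
        rw [hzero, zero_tmul]

end Aux

/-- A commutative ring is *coherent* if every finitely generated ideal is
finitely presented (as a module). -/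
def IsCoherentRing (R : Type*) [CommRing R] : Prop :=
  ∀ I : Ideal R, I.FG → Module.FinitePresentation R I

/-- The filtered colimit of a direct system of coherent commutative rings
with flat transition maps is a coherent ring. -/
theorem isCoherentRing_directLimit
    {ι : Type*} [Preorder ι] [IsDirected ι (· ≤ ·)] [Nonempty ι] [DecidableEq ι]
    (G : ι → Type*) [∀ i, CommRing (G i)]
    (f : ∀ i j, i ≤ j → G i →+* G j)
    [DirectedSystem G fun i j h => f i j h]
    (hcoh : ∀ i, IsCoherentRing (G i))
    (hflat : ∀ i j (h : i ≤ j), (f i j h).Flat) :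
    IsCoherentRing (Ring.DirectLimit G fun i j h => f i j h) := by
  classical
  intro I hI
  set R := Ring.DirectLimit G fun i j h => f i j h with hR
  obtain ⟨s, hs⟩ := hI
  obtain ⟨i₀⟩ := ‹Nonempty ι›
  obtain ⟨j, hij, y, hy⟩ := myExistsLiftFamily G f i₀ (fun p : ↥s => (p : R))
  letI : Algebra (G j) R := (Ring.DirectLimit.of G (fun i j h => f i j h) j).toAlgebra
  have halg : algebraMap (G j) R = Ring.DirectLimit.of G (fun i j h => f i j h) j :=
    RingHom.algebraMap_toAlgebra _
  haveI hRflat : Module.Flat (G j) R := myFlatDirectLimit G f hflat j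
  set I₀ : Ideal (G j) := Ideal.span (Set.range y) with hI₀
  have hI₀fg : I₀.FG := ⟨Finset.image y Finset.univ, by
    rw [Finset.coe_image, Finset.coe_univ, Set.image_univ]⟩
  have hmapI : Ideal.map (algebraMap (G j) R) I₀ = I := by
    rw [hI₀, Ideal.map_span, ← Set.range_comp]
    have h2 : Set.range (⇑(algebraMap (G j) R) ∘ y) = ↑s := by
      have h3 : (⇑(algebraMap (G j) R) ∘ y) = fun p : ↥s => (p : R) := funext fun p => by
        rw [Function.comp_apply, halg, hy]
      rw [h3]
      ext x
      simp
    rw [h2]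
    exact hs
  have hFPI₀ : Module.FinitePresentation (G j) I₀ := hcoh j I₀ hI₀fg
  set g : ↥I₀ →ₗ[G j] R := (Algebra.linearMap (G j) R).comp I₀.subtype with hg
  set φ : R ⊗[G j] ↥I₀ →ₗ[R] R := g.liftBaseChange R with hφ
  have hinj : Function.Injective φ := by
    have h1 : Function.Injective (LinearMap.lTensor R I₀.subtype) :=
      (Module.Flat.iff_lTensor_injective' (R := G j) (M := R)).mp hRflat I₀
    have heq : (φ.restrictScalars (G j))
        = (TensorProduct.rid (G j) R).toLinearMap ∘ₗ LinearMap.lTensor R I₀.subtype := by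
      apply TensorProduct.ext'
      intro x m
      simp only [LinearMap.coe_restrictScalars, hφ, LinearMap.liftBaseChange_tmul, hg,
        LinearMap.coe_comp, Function.comp_apply, LinearMap.comp_apply, LinearEquiv.coe_coe,
        LinearMap.lTensor_tmul, Submodule.coe_subtype, TensorProduct.rid_tmul,
        Algebra.linearMap_apply, Algebra.smul_def]
      rw [Algebra.algebraMap_self_apply, mul_comm]
    have h3 : Function.Injective (φ.restrictScalars (G j) : R ⊗[G j] ↥I₀ →ₗ[G j] R) := by
      rw [heq]
      exact (TensorProduct.rid (G j) R).injective.comp h1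
    exact h3
  have hrange : LinearMap.range φ = I := by
    apply le_antisymm
    · rintro x ⟨t, rfl⟩
      induction t using TensorProduct.induction_on with
      | zero => simp
      | tmul x m =>
        rw [LinearMap.liftBaseChange_tmul]
        have hgm : g m ∈ I := by
          rw [← hmapI]
          exact Ideal.mem_map_of_mem _ m.2
        exact Submodule.smul_mem I x hgm
      | add u v hu hv =>
        rw [map_add]
        exact I.add_mem hu hv
    · rw [← hs]
      refine Ideal.span_le.mpr ?_
      intro x hx
      refine ⟨(1 : R) ⊗ₜ[G j] ⟨y ⟨x, hx⟩, Ideal.subset_span ⟨⟨x, hx⟩, rfl⟩⟩, ?_⟩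
      simp only [hφ, LinearMap.liftBaseChange_tmul, one_smul, hg, LinearMap.coe_comp,
        Function.comp_apply, Submodule.coe_subtype, Algebra.linearMap_apply, halg]
      exact hy ⟨x, hx⟩
  set ψ : R ⊗[G j] ↥I₀ →ₗ[R] ↥I :=
    φ.codRestrict I (fun t => hrange ▸ LinearMap.mem_range_self φ t) with hψ
  have hψinj : Function.Injective ψ := by
    intro u v huv
    exact hinj (by simpa [ψ, Subtype.ext_iff] using huv)
  have hψsurj : Function.Surjective ψ := by
    rintro ⟨x, hx⟩
    rw [← hrange] at hx
    obtain ⟨t, rfl⟩ := hx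
    exact ⟨t, rfl⟩
  set e : (R ⊗[G j] ↥I₀) ≃ₗ[R] ↥I := LinearEquiv.ofBijective ψ ⟨hψinj, hψsurj⟩ with he
  haveI : Module.FinitePresentation (G j) ↥I₀ := hFPI₀
  haveI : Module.FinitePresentation R (R ⊗[G j] ↥I₀) :=
    FinitePresentation.of_isBaseChange (TensorProduct.mk (G j) R ↥I₀ 1)
      (TensorProduct.isBaseChange (G j) ↥I₀ R)
  exact Module.finitePresentation_of_surjective e.toLinearMap e.surjective
    (by rw [LinearMap.ker_eq_bot.mpr e.injective]; exact Submodule.fg_bot)
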